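/- Minor preservation under GASS perturbation. Let B ≥ 2, let e₁, …, e_B ∈ ℝᵈ, and let t, u ∈ ℝᵈ be orthonormal vectors. For δ = ((a₁, …, a_B), (b₁, …, b_B)) ∈ ℝ^B × ℝ^B define ẽᵢ(δ) = eᵢ + aᵢ t + bᵢ u, and let Ã(δ) be the d × (B−1) real matrix whose columns are the edge vectors vᵢ(δ) = ẽᵢ(δ) − ẽ₁(δ), i = 2, …, B. Let δ be distributed as the product of i.i.d. uniform distributions on [−r₁, r₁] for the aᵢ and on [−r₂, r₂] for the bᵢ, all independent. Then for every row-selection function s : Fin (B−1) → Fin d, the expectation of the (B−1) × (B−1) minor determinant satisfies E[ det( Ã(δ).submatrix s id ) ] = det( Ã(0).submatrix s id ). -/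

import Mathlib

open MeasureTheory

/-- The uniform probability distribution on `[-r, r]`; for `r = 0` this is the Dirac mass
at `0`. -/
noncomputable def unifIcc (r : ℝ) : Measure ℝ :=
  if r = 0 then Measure.dirac 0
  else ((2 * r).toNNReal)⁻¹ • volume.restrict (Set.Icc (-r) r)

instance (r : ℝ) : SigmaFinite (unifIcc r) := by
  unfold unifIcc; split <;> infer_instance

/-- Product measure: `B` i.i.d. uniform shifts `aᵢ` on `[-r₁, r₁]` and `B` i.i.d. uniform
shifts `bᵢ` on `[-r₂, r₂]`, all `2B` coordinates independent. -/
noncomputable def gassMeasure (B : ℕ) (r₁ r₂ : ℝ) :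
    Measure ((Fin B → ℝ) × (Fin B → ℝ)) :=
  (Measure.pi fun _ => unifIcc r₁).prod (Measure.pi fun _ => unifIcc r₂)

/-- Perturbed points `ẽᵢ(δ) = eᵢ + aᵢ • t + bᵢ • u` where `δ = (a, b)`. -/
noncomputable def gassPert {d B : ℕ} (e : Fin B → EuclideanSpace ℝ (Fin d))
    (t u : EuclideanSpace ℝ (Fin d)) (δ : (Fin B → ℝ) × (Fin B → ℝ)) (i : Fin B) :
    EuclideanSpace ℝ (Fin d) :=
  e i + δ.1 i • t + δ.2 i • u

/-- Edge vectors `vᵢ(δ) = ẽᵢ₊₁(δ) - ẽ₁(δ)`, for `i = 2, …, B` (indexed by `Fin (B - 1)`). -/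
noncomputable def gassEdge {d B : ℕ} (e : Fin B → EuclideanSpace ℝ (Fin d))
    (t u : EuclideanSpace ℝ (Fin d)) (δ : (Fin B → ℝ) × (Fin B → ℝ))
    (j : Fin (B - 1)) : EuclideanSpace ℝ (Fin d) :=
  gassPert e t u δ ⟨j.1 + 1, by have := j.2; omega⟩ -
    gassPert e t u δ ⟨0, by have := j.2; omega⟩

/-- The `(B-1) × (B-1)` Gram matrix of the edge vectors, `G̃(δ)ᵢⱼ = ⟨vᵢ(δ), vⱼ(δ)⟩`. -/
noncomputable def gassGram {d B : ℕ} (e : Fin B → EuclideanSpace ℝ (Fin d))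
    (t u : EuclideanSpace ℝ (Fin d)) (δ : (Fin B → ℝ) × (Fin B → ℝ)) :
    Matrix (Fin (B - 1)) (Fin (B - 1)) ℝ :=
  Matrix.of fun i j => inner ℝ (gassEdge e t u δ i) (gassEdge e t u δ j)

/-- The `d × (B-1)` edge matrix `Ã(δ)` whose columns are the edge vectors `vᵢ(δ)`. -/
noncomputable def gassEdgeMatrix {d B : ℕ} (e : Fin B → EuclideanSpace ℝ (Fin d))
    (t u : EuclideanSpace ℝ (Fin d)) (δ : (Fin B → ℝ) × (Fin B → ℝ)) :
    Matrix (Fin d) (Fin (B - 1)) ℝ :=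
  Matrix.of fun i j => gassEdge e t u δ j i

/-! ### Auxiliary lemmas -/

/-- An alternating map vanishes on a family two of whose entries are multiples of the same
vector. -/
lemma alt_vanish {ι R M N : Type*} [Fintype ι] [DecidableEq ι] [CommRing R]
    [AddCommGroup M] [Module R M] [AddCommGroup N] [Module R N]
    (f : M [⋀^ι]→ₗ[R] N) (g : ι → M) (c : M) (β : ι → R) {i j : ι} (hij : i ≠ j)
    (hi : g i = β i • c) (hj : g j = β j • c) : f g = 0 := by
  have h1 : g = Function.update g i (β i • c) := by
    rw [← hi, Function.update_eq_self]
  rw [h1, f.map_update_smul]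
  have h2 : Function.update g i c = Function.update (Function.update g i c) j (β j • c) := by
    rw [show (β j • c) = Function.update g i c j from by
      rw [Function.update_of_ne hij.symm, hj], Function.update_eq_self]
  rw [h2, f.map_update_smul]
  have h3 : f (Function.update (Function.update g i c) j c) = 0 := by
    refine f.map_eq_zero_of_eq _ ?_ hij
    rw [Function.update_of_ne hij, Function.update_self, Function.update_self]
  rw [h3, smul_zero, smul_zero]

/-- First-order expansion of an alternating map under a perturbation of all entries by
multiples of a single vector: all higher-order terms vanish. -/
lemma alt_expand {ι R M N : Type*} [Fintype ι] [DecidableEq ι] [CommRing R]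
    [AddCommGroup M] [Module R M] [AddCommGroup N] [Module R N]
    (f : M [⋀^ι]→ₗ[R] N) (w : ι → M) (c : M) (β : ι → R) :
    f (fun i => w i + β i • c) = f w + ∑ i, β i • f (Function.update w i c) := by
  classical
  have h0 : (fun i => w i + β i • c) = (fun i => β i • c) + w := by
    funext i; simp [add_comm]
  rw [h0, show f ((fun i => β i • c) + w)
      = f.toMultilinearMap ((fun i => β i • c) + w) from rfl,
    MultilinearMap.map_add_univ]
  simp only [AlternatingMap.coe_multilinearMap]
  have hzero : ∀ s : Finset ι, ¬ s.card ≤ 1 →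
      f (s.piecewise (fun i => β i • c) w) = 0 := by
    intro s hs
    obtain ⟨a, ha, b, hb, hab⟩ := Finset.one_lt_card.mp (show 1 < s.card by omega)
    exact alt_vanish f _ c β hab (Finset.piecewise_eq_of_mem _ _ _ ha)
      (Finset.piecewise_eq_of_mem _ _ _ hb)
  rw [← Finset.sum_filter_add_sum_filter_not Finset.univ (fun s : Finset ι => s.card ≤ 1)]
  rw [Finset.sum_eq_zero (fun (s : Finset ι) hs => hzero s (Finset.mem_filter.mp hs).2),
    add_zero]
  have hset : Finset.univ.filter (fun s : Finset ι => s.card ≤ 1)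
      = insert (∅ : Finset ι) (Finset.univ.image fun i => ({i} : Finset ι)) := by
    ext s
    simp only [Finset.mem_filter, Finset.mem_univ, true_and, Finset.mem_insert,
      Finset.mem_image]
    constructor
    · intro h
      rcases Nat.le_one_iff_eq_zero_or_eq_one.mp h with h | h
      · exact Or.inl (Finset.card_eq_zero.mp h)
      · obtain ⟨a, ha⟩ := Finset.card_eq_one.mp h
        exact Or.inr ⟨a, ha.symm⟩
    · rintro (rfl | ⟨a, -, rfl⟩) <;> simp
  rw [hset, Finset.sum_insert (by simp), Finset.sum_image
    (fun a _ b _ h => Finset.singleton_injective h), Finset.piecewise_empty]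
  congr 1
  refine Finset.sum_congr rfl fun i _ => ?_
  rw [Finset.piecewise_singleton, f.map_update_smul]

lemma alt_symm_sum {ι R M : Type*} [Fintype ι] [DecidableEq ι] [CommRing R]
    [AddCommGroup M] [Module R M]
    (f : M [⋀^ι]→ₗ[R] R) (w : ι → M) (c : M) (β : ι → R) :
    f (fun i => w i + β i • c) + f (fun i => w i + (-β i) • c) = 2 * f w := by
  rw [alt_expand f w c β, alt_expand f w c (fun i => -β i)]
  simp only [neg_smul, Finset.sum_neg_distrib]
  ring

lemma unifIcc_neg (r : ℝ) :
    Measure.map (fun x : ℝ => -x) (unifIcc r) = unifIcc r := by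
  unfold unifIcc
  split_ifs with h
  · rw [Measure.map_dirac' measurable_neg]; norm_num
  · rw [Measure.map_smul]
    congr 1
    have hpre : (fun x : ℝ => -x) ⁻¹' (Set.Icc (-r) r) = Set.Icc (-r) r := by
      ext x
      simp only [Set.mem_preimage, Set.mem_Icc]
      constructor <;> (rintro ⟨h1, h2⟩; constructor <;> linarith)
    conv_lhs => rw [← hpre]
    rw [← Measure.restrict_map measurable_neg measurableSet_Icc,
      (Measure.measurePreserving_neg (volume : Measure ℝ)).map_eq]

lemma unifIcc_Icc {r : ℝ} (hr : 0 ≤ r) : unifIcc r (Set.Icc (-r) r) = 1 := by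
  unfold unifIcc
  split_ifs with h
  · subst h
    rw [Measure.dirac_apply_of_mem (by simp)]
  · have hr' : 0 < r := lt_of_le_of_ne hr (Ne.symm h)
    have h0 : (2 * r).toNNReal ≠ 0 := by
      simp only [ne_eq, Real.toNNReal_eq_zero, not_le]; linarith
    rw [Measure.smul_apply, Measure.restrict_apply_self, Real.volume_Icc,
      show r - -r = 2 * r by ring, ENNReal.smul_def, smul_eq_mul, ENNReal.ofReal,
      ← ENNReal.coe_mul, inv_mul_cancel₀ h0, ENNReal.coe_one]

lemma unifIcc_isProbability {r : ℝ} (hr : 0 ≤ r) : IsProbabilityMeasure (unifIcc r) := by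
  constructor
  unfold unifIcc
  split_ifs with h
  · simp
  · have hr' : 0 < r := lt_of_le_of_ne hr (Ne.symm h)
    have h0 : (2 * r).toNNReal ≠ 0 := by
      simp only [ne_eq, Real.toNNReal_eq_zero, not_le]; linarith
    rw [Measure.smul_apply, Measure.restrict_apply_univ, Real.volume_Icc,
      show r - -r = 2 * r by ring, ENNReal.smul_def, smul_eq_mul, ENNReal.ofReal,
      ← ENNReal.coe_mul, inv_mul_cancel₀ h0, ENNReal.coe_one]

lemma pi_neg_measurePreserving {B : ℕ} (r : ℝ) :
    MeasurePreserving (fun a : Fin B → ℝ => -a)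
      (Measure.pi fun _ => unifIcc r) (Measure.pi fun _ => unifIcc r) := by
  refine ⟨measurable_neg, ?_⟩
  refine (Measure.pi_eq fun S hS => ?_).symm
  rw [Measure.map_apply measurable_neg (MeasurableSet.univ_pi hS)]
  have hpre : (fun a : Fin B → ℝ => -a) ⁻¹' (Set.univ.pi S)
      = Set.univ.pi fun i => (fun x : ℝ => -x) ⁻¹' S i := by
    ext x; simp [Set.mem_pi]
  rw [hpre, Measure.pi_pi]
  refine Finset.prod_congr rfl fun i _ => ?_
  rw [← Measure.map_apply measurable_neg (hS i), unifIcc_neg]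


lemma gassMinor_eq_alt {d B : ℕ} (e : Fin B → EuclideanSpace ℝ (Fin d))
    (t u : EuclideanSpace ℝ (Fin d)) (s : Fin (B - 1) → Fin d)
    (δ : (Fin B → ℝ) × (Fin B → ℝ)) :
    ((gassEdgeMatrix e t u δ).submatrix s id).det
      = Matrix.detRowAlternating (fun j i : Fin (B - 1) => gassEdge e t u δ j (s i)) := by
  rw [show (gassEdgeMatrix e t u δ).submatrix s id
      = (Matrix.of fun j i : Fin (B - 1) => gassEdge e t u δ j (s i)).transpose from rfl,
    Matrix.det_transpose]
  rfl

lemma gass_I1 {d B : ℕ} (e : Fin B → EuclideanSpace ℝ (Fin d))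
    (t u : EuclideanSpace ℝ (Fin d)) (s : Fin (B - 1) → Fin d) (a b : Fin B → ℝ) :
    ((gassEdgeMatrix e t u (a, b)).submatrix s id).det
      + ((gassEdgeMatrix e t u (-a, b)).submatrix s id).det
      = 2 * ((gassEdgeMatrix e t u (0, b)).submatrix s id).det := by
  classical
  rw [gassMinor_eq_alt, gassMinor_eq_alt, gassMinor_eq_alt]
  have e1 : (fun j i : Fin (B - 1) => gassEdge e t u (a, b) j (s i))
      = fun j => (fun i => gassEdge e t u (0, b) j (s i))
          + (a ⟨j.1 + 1, by have := j.2; omega⟩ - a ⟨0, by have := j.2; omega⟩)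
            • (fun i => t (s i)) := by
    funext j i
    simp only [gassEdge, gassPert, Pi.add_apply, Pi.smul_apply, smul_eq_mul,
      PiLp.sub_apply, PiLp.add_apply, PiLp.smul_apply, Pi.zero_apply, Pi.neg_apply]
    ring
  have e2 : (fun j i : Fin (B - 1) => gassEdge e t u (-a, b) j (s i))
      = fun j => (fun i => gassEdge e t u (0, b) j (s i))
          + (-(a ⟨j.1 + 1, by have := j.2; omega⟩ - a ⟨0, by have := j.2; omega⟩))
            • (fun i => t (s i)) := by
    funext j i
    simp only [gassEdge, gassPert, Pi.add_apply, Pi.smul_apply, smul_eq_mul,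
      PiLp.sub_apply, PiLp.add_apply, PiLp.smul_apply, Pi.zero_apply, Pi.neg_apply]
    ring
  rw [e1, e2]
  exact alt_symm_sum Matrix.detRowAlternating
    (fun j i => gassEdge e t u (0, b) j (s i)) (fun i => t (s i))
    (fun j => a ⟨j.1 + 1, by have := j.2; omega⟩ - a ⟨0, by have := j.2; omega⟩)

lemma gass_I2 {d B : ℕ} (e : Fin B → EuclideanSpace ℝ (Fin d))
    (t u : EuclideanSpace ℝ (Fin d)) (s : Fin (B - 1) → Fin d) (b : Fin B → ℝ) :
    ((gassEdgeMatrix e t u (0, b)).submatrix s id).det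
      + ((gassEdgeMatrix e t u (0, -b)).submatrix s id).det
      = 2 * ((gassEdgeMatrix e t u (0, 0)).submatrix s id).det := by
  classical
  rw [gassMinor_eq_alt, gassMinor_eq_alt, gassMinor_eq_alt]
  have e1 : (fun j i : Fin (B - 1) => gassEdge e t u ((0 : Fin B → ℝ), b) j (s i))
      = fun j => (fun i => gassEdge e t u (0, 0) j (s i))
          + (b ⟨j.1 + 1, by have := j.2; omega⟩ - b ⟨0, by have := j.2; omega⟩)
            • (fun i => u (s i)) := by
    funext j i
    simp only [gassEdge, gassPert, Pi.add_apply, Pi.smul_apply, smul_eq_mul,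
      PiLp.sub_apply, PiLp.add_apply, PiLp.smul_apply, Pi.zero_apply, Pi.neg_apply]
    ring
  have e2 : (fun j i : Fin (B - 1) => gassEdge e t u ((0 : Fin B → ℝ), -b) j (s i))
      = fun j => (fun i => gassEdge e t u (0, 0) j (s i))
          + (-(b ⟨j.1 + 1, by have := j.2; omega⟩ - b ⟨0, by have := j.2; omega⟩))
            • (fun i => u (s i)) := by
    funext j i
    simp only [gassEdge, gassPert, Pi.add_apply, Pi.smul_apply, smul_eq_mul,
      PiLp.sub_apply, PiLp.add_apply, PiLp.smul_apply, Pi.zero_apply, Pi.neg_apply]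
    ring
  rw [e1, e2]
  exact alt_symm_sum Matrix.detRowAlternating
    (fun j i => gassEdge e t u (0, 0) j (s i)) (fun i => u (s i))
    (fun j => b ⟨j.1 + 1, by have := j.2; omega⟩ - b ⟨0, by have := j.2; omega⟩)

lemma gassMinor_continuous {d B : ℕ} (e : Fin B → EuclideanSpace ℝ (Fin d))
    (t u : EuclideanSpace ℝ (Fin d)) (s : Fin (B - 1) → Fin d) :
    Continuous fun δ : (Fin B → ℝ) × (Fin B → ℝ) =>
      ((gassEdgeMatrix e t u δ).submatrix s id).det := by
  apply Continuous.matrix_det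
  apply continuous_matrix
  intro i j
  have h : (fun δ : (Fin B → ℝ) × (Fin B → ℝ) =>
        ((gassEdgeMatrix e t u δ).submatrix s id) i j)
      = fun δ =>
        (e ⟨j.1 + 1, by have := j.2; omega⟩ (s i)
            + δ.1 ⟨j.1 + 1, by have := j.2; omega⟩ * t (s i)
            + δ.2 ⟨j.1 + 1, by have := j.2; omega⟩ * u (s i))
          - (e ⟨0, by have := j.2; omega⟩ (s i)
            + δ.1 ⟨0, by have := j.2; omega⟩ * t (s i)
            + δ.2 ⟨0, by have := j.2; omega⟩ * u (s i)) := by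
    funext δ
    simp [gassEdgeMatrix, gassEdge, gassPert, Matrix.submatrix_apply, Matrix.of_apply,
      PiLp.sub_apply, PiLp.add_apply, PiLp.smul_apply, smul_eq_mul]
  rw [h]
  fun_prop

lemma gass_integrable_aux {X : Type*} [TopologicalSpace X] [MeasurableSpace X]
    [OpensMeasurableSpace X] [T2Space X] {μ : Measure X} [IsFiniteMeasure μ] {g : X → ℝ}
    (hg : Continuous g) {K : Set X} (hK : IsCompact K) (h0 : ∀ᵐ x ∂μ, x ∈ K) :
    Integrable g μ := by
  rw [← Measure.restrict_eq_self_of_ae_mem h0]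
  exact hg.continuousOn.integrableOn_compact hK

/-- **Minor preservation under GASS perturbation.** For `B ≥ 2` points `e₁, …, e_B ∈ ℝᵈ`
perturbed along two orthonormal directions `t, u` by independent uniform shifts on
`[-r₁, r₁]` and `[-r₂, r₂]`, every maximal `(B-1) × (B-1)` minor of the perturbed edge
matrix `Ã(δ)` (obtained by selecting rows via `s : Fin (B-1) → Fin d`) has the same
expectation as the corresponding unperturbed minor. -/
theorem gass_expected_minor_eq {d B : ℕ} (hB : 2 ≤ B)
    (e : Fin B → EuclideanSpace ℝ (Fin d)) (t u : EuclideanSpace ℝ (Fin d))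
    (ht : ‖t‖ = 1) (hu : ‖u‖ = 1) (htu : inner ℝ t u = (0 : ℝ))
    {r₁ r₂ : ℝ} (hr₁ : 0 ≤ r₁) (hr₂ : 0 ≤ r₂) :
    ∀ s : Fin (B - 1) → Fin d,
      ∫ δ, ((gassEdgeMatrix e t u δ).submatrix s id).det ∂(gassMeasure B r₁ r₂) =
        ((gassEdgeMatrix e t u 0).submatrix s id).det := by
  intro s
  classical
  haveI h1 : IsProbabilityMeasure (unifIcc r₁) := unifIcc_isProbability hr₁
  haveI h2 : IsProbabilityMeasure (unifIcc r₂) := unifIcc_isProbability hr₂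
  haveI : IsProbabilityMeasure (gassMeasure B r₁ r₂) := by
    unfold gassMeasure; infer_instance
  set μ := gassMeasure B r₁ r₂ with hμ
  set μ₂ : Measure (Fin B → ℝ) := Measure.pi fun _ => unifIcc r₂ with hμ₂
  set D := fun δ : (Fin B → ℝ) × (Fin B → ℝ) =>
    ((gassEdgeMatrix e t u δ).submatrix s id).det with hD
  have hDc : Continuous D := gassMinor_continuous e t u s
  set K : Set ((Fin B → ℝ) × (Fin B → ℝ)) :=
    (Set.univ.pi fun _ : Fin B => Set.Icc (-r₁) r₁) ×ˢ
      (Set.univ.pi fun _ : Fin B => Set.Icc (-r₂) r₂) with hK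
  have hKc : IsCompact K :=
    (isCompact_univ_pi fun _ => isCompact_Icc).prod (isCompact_univ_pi fun _ => isCompact_Icc)
  have hKm : MeasurableSet K :=
    (MeasurableSet.univ_pi fun _ => measurableSet_Icc).prod
      (MeasurableSet.univ_pi fun _ => measurableSet_Icc)
  have hK1 : μ K = 1 := by
    rw [hμ, hK]
    rw [gassMeasure, Measure.prod_prod, Measure.pi_pi, Measure.pi_pi]
    simp [unifIcc_Icc hr₁, unifIcc_Icc hr₂]
  have hKae : ∀ᵐ δ ∂μ, δ ∈ K := by
    rw [ae_iff]
    have hc : {δ : (Fin B → ℝ) × (Fin B → ℝ) | ¬ δ ∈ K} = Kᶜ := rfl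
    rw [hc, measure_compl hKm (by simp), hK1, measure_univ]
    simp
  have hDint : Integrable D μ := gass_integrable_aux hDc hKc hKae
  have hmp1 : MeasurePreserving (fun δ : (Fin B → ℝ) × (Fin B → ℝ) => (-δ.1, δ.2)) μ μ := by
    rw [hμ]
    unfold gassMeasure
    exact (pi_neg_measurePreserving r₁).prod (MeasurePreserving.id _)
  have hφint : Integrable (fun δ : (Fin B → ℝ) × (Fin B → ℝ) => D (-δ.1, δ.2)) μ :=
    (hmp1.integrable_comp hDc.aestronglyMeasurable).mpr hDint
  have hmap1 : ∫ δ, D δ ∂μ = ∫ δ, D (-δ.1, δ.2) ∂μ := by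
    conv_lhs => rw [← hmp1.map_eq]
    exact integral_map hmp1.measurable.aemeasurable hDc.aestronglyMeasurable
  have hsum1 : ∫ δ, (D δ + D (-δ.1, δ.2)) ∂μ = ∫ δ, 2 * D (0, δ.2) ∂μ := by
    refine integral_congr_ae (Filter.Eventually.of_forall fun δ => ?_)
    exact gass_I1 e t u s δ.1 δ.2
  rw [integral_add hDint hφint, integral_const_mul] at hsum1
  have step1 : ∫ δ, D δ ∂μ = ∫ δ, D (0, δ.2) ∂μ := by linarith
  have hsnd : MeasurePreserving Prod.snd μ μ₂ := by
    refine ⟨measurable_snd, ?_⟩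
    rw [hμ, hμ₂]
    unfold gassMeasure
    rw [Measure.map_snd_prod, measure_univ, one_smul]
  set D₂ := fun b : Fin B → ℝ => D (0, b) with hD₂
  have hD₂c : Continuous D₂ := hDc.comp (continuous_const.prodMk continuous_id)
  have step2 : ∫ δ, D (0, δ.2) ∂μ = ∫ b, D₂ b ∂μ₂ := by
    conv_rhs => rw [← hsnd.map_eq]
    exact (integral_map hsnd.measurable.aemeasurable hD₂c.aestronglyMeasurable).symm
  set K₂ : Set (Fin B → ℝ) := Set.univ.pi fun _ : Fin B => Set.Icc (-r₂) r₂ with hK₂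
  have hK₂c : IsCompact K₂ := isCompact_univ_pi fun _ => isCompact_Icc
  have hK₂m : MeasurableSet K₂ := MeasurableSet.univ_pi fun _ => measurableSet_Icc
  have hK₂1 : μ₂ K₂ = 1 := by
    rw [hμ₂, hK₂, Measure.pi_pi]
    simp [unifIcc_Icc hr₂]
  have hK₂ae : ∀ᵐ b ∂μ₂, b ∈ K₂ := by
    rw [ae_iff]
    have hc : {b : Fin B → ℝ | ¬ b ∈ K₂} = K₂ᶜ := rfl
    rw [hc, measure_compl hK₂m (by simp), hK₂1, measure_univ]
    simp
  have hD₂int : Integrable D₂ μ₂ := gass_integrable_aux hD₂c hK₂c hK₂ae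
  have hmp2 : MeasurePreserving (fun b : Fin B → ℝ => -b) μ₂ μ₂ := by
    rw [hμ₂]; exact pi_neg_measurePreserving r₂
  have hφ₂int : Integrable (fun b : Fin B → ℝ => D₂ (-b)) μ₂ :=
    (hmp2.integrable_comp hD₂c.aestronglyMeasurable).mpr hD₂int
  have hmap2 : ∫ b, D₂ b ∂μ₂ = ∫ b, D₂ (-b) ∂μ₂ := by
    conv_lhs => rw [← hmp2.map_eq]
    exact integral_map hmp2.measurable.aemeasurable hD₂c.aestronglyMeasurable
  have hsum2 : ∫ b, (D₂ b + D₂ (-b)) ∂μ₂ = ∫ _b, 2 * D (0, 0) ∂μ₂ := by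
    refine integral_congr_ae (Filter.Eventually.of_forall fun b => ?_)
    exact gass_I2 e t u s b
  rw [integral_add hD₂int hφ₂int, integral_const] at hsum2
  haveI : IsProbabilityMeasure μ₂ := by rw [hμ₂]; infer_instance
  rw [probReal_univ] at hsum2
  simp only [ENNReal.toReal_one, one_smul] at hsum2
  have step3 : ∫ b, D₂ b ∂μ₂ = D (0, 0) := by linarith
  rw [step1, step2, step3]
  rfl
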